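/- (Linearized Darrozès–Guiraud inequality.) Let d ≥ 1, let n ∈ ℝ^d be a unit vector, and let dμ(v) = √(2π) M(v) (v·n)_+ dv, which is a probability measure on ℝ^d. Let g : ℝ^d → ℝ be measurable with ∫ g² dμ < ∞ and ∫_{ℝ^d} g(v)² M(v) |v·n| dv < ∞, and suppose g satisfies the diffuse-reflection condition g(v) = ∫ g dμ for almost every v with v·n < 0. Then √(2π) ∫_{ℝ^d} g(v)² M(v) (v·n) dv = ∫_{ℝ^d} ( g(v) − ∫ g dμ )² dμ(v) ≥ 0. -/

import Mathlib

open MeasureTheory Real Set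
open scoped InnerProductSpace ENNReal NNReal

set_option maxHeartbeats 1000000

noncomputable section

/-- The standard Gaussian `M(v) = (2π)^{-d/2} exp(-|v|²/2)` on `ℝ^d`. -/
def gaussM {d : ℕ} (v : EuclideanSpace ℝ (Fin d)) : ℝ :=
  (2 * π) ^ (-(d : ℝ) / 2) * Real.exp (-‖v‖ ^ 2 / 2)

/-- The outgoing boundary measure `dμ(v) = √(2π) M(v) (v·n)_+ dv`. -/
def bdryMeasure (d : ℕ) (n : EuclideanSpace ℝ (Fin d)) :
    Measure (EuclideanSpace ℝ (Fin d)) :=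
  volume.withDensity fun v =>
    ENNReal.ofReal (Real.sqrt (2 * π) * gaussM v * max ⟪v, n⟫_ℝ 0)


lemma int1d_exp : ∫ x : ℝ, Real.exp (-x ^ 2 / 2) = Real.sqrt (2 * π) := by
  have h := integral_gaussian (1/2 : ℝ)
  simp only [neg_mul] at h
  rw [show (π / (1/2) : ℝ) = 2 * π by ring] at h
  rw [← h]
  congr 1 with x
  ring_nf

lemma integrable1d_plus : Integrable (fun x : ℝ => Real.exp (-x ^ 2 / 2) * max x 0) := by
  have hi : Integrable (fun x : ℝ => x * Real.exp (-(1/2) * x ^ 2)) :=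
    integrable_mul_exp_neg_mul_sq (by norm_num)
  refine (hi.abs.mono' ?_ ?_)
  · exact (Real.continuous_exp.comp (by continuity)).aestronglyMeasurable.mul
      (continuous_id.max continuous_const).aestronglyMeasurable
  · filter_upwards with x
    rw [Real.norm_eq_abs, abs_mul, abs_mul, abs_of_pos (Real.exp_pos _),
      show -(1/2 : ℝ) * x ^ 2 = -x^2/2 by ring, abs_of_pos (Real.exp_pos _), mul_comm]
    have hm : |max x 0| ≤ |x| := by
      rcases le_or_gt x 0 with h | h
      · simp [max_eq_right h]
      · simp [max_eq_left h.le]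
    exact mul_le_mul hm le_rfl (Real.exp_pos _).le (abs_nonneg _)

lemma int1d_plus : ∫ x : ℝ, Real.exp (-x ^ 2 / 2) * max x 0 = 1 := by
  have h0 : ∀ x ∉ Ioi (0:ℝ), Real.exp (-x ^ 2 / 2) * max x 0 = 0 := by
    intro x hx
    simp only [mem_Ioi, not_lt] at hx
    simp [max_eq_right hx]
  rw [← setIntegral_eq_integral_of_forall_compl_eq_zero h0]
  have heq : ∀ x ∈ Ioi (0:ℝ), Real.exp (-x ^ 2 / 2) * max x 0 = x * Real.exp (-x^2/2) := by
    intro x hx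
    rw [max_eq_left (le_of_lt hx), mul_comm]
  rw [setIntegral_congr_fun measurableSet_Ioi heq]
  have hderiv : ∀ x ∈ Ioi (0:ℝ),
      HasDerivAt (fun y : ℝ => -Real.exp (-y^2/2)) (x * Real.exp (-x^2/2)) x := by
    intro x _
    have h1 : HasDerivAt (fun y : ℝ => -y^2/2) (-x) x := by
      have := ((hasDerivAt_pow 2 x).neg).div_const 2
      simpa using this.congr_deriv (by push_cast; ring)
    have := (h1.exp).fun_neg
    refine this.congr_deriv ?_
    ring
  have hint : IntegrableOn (fun x : ℝ => x * Real.exp (-x^2/2)) (Ioi 0) := by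
    have hi : Integrable (fun x : ℝ => x * Real.exp (-(1/2) * x ^ 2)) :=
      integrable_mul_exp_neg_mul_sq (by norm_num)
    have : (fun x : ℝ => x * Real.exp (-x^2/2)) = fun x : ℝ => x * Real.exp (-(1/2) * x ^ 2) := by
      funext x; ring_nf
    rw [this]
    exact hi.integrableOn
  have htend : Filter.Tendsto (fun y : ℝ => -Real.exp (-y^2/2)) Filter.atTop (nhds 0) := by
    rw [← neg_zero]
    apply Filter.Tendsto.neg
    apply Real.tendsto_exp_atBot.comp
    have h2 : Filter.Tendsto (fun y : ℝ => y^2/2) Filter.atTop Filter.atTop :=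
      (Filter.tendsto_pow_atTop (by norm_num)).atTop_div_const (by norm_num)
    have h3 : Filter.Tendsto (fun y : ℝ => -(y^2/2)) Filter.atTop Filter.atBot :=
      Filter.tendsto_neg_atBot_iff.mpr h2
    convert h3 using 2 with y
    ring
  have := integral_Ioi_of_hasDerivAt_of_tendsto
    (f := fun y : ℝ => -Real.exp (-y^2/2))
    (Continuous.continuousWithinAt (by continuity)) hderiv hint htend
  rw [this]
  norm_num


lemma integrable1d_exp : Integrable (fun x : ℝ => Real.exp (-x ^ 2 / 2)) := by
  have := integrable_exp_neg_mul_sq (by norm_num : (0:ℝ) < 1/2)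
  refine this.congr (by filter_upwards with x; ring_nf)

lemma sqrt_two_pi_pos : 0 < Real.sqrt (2 * π) :=
  Real.sqrt_pos.mpr (by positivity)

section Pi
variable {d : ℕ} (i0 : Fin d)

/-- the 1D factors -/
def fFac (i0 i : Fin d) (t : ℝ) : ℝ :=
  (2 * π) ^ (-(1:ℝ) / 2) * Real.exp (-t ^ 2 / 2) * (if i = i0 then max t 0 else 1)

lemma c1_eq : (2 * π : ℝ) ^ (-(1:ℝ) / 2) = (Real.sqrt (2 * π))⁻¹ := by
  rw [Real.sqrt_eq_rpow, show (-(1:ℝ)/2) = -(1/2) by ring, Real.rpow_neg (by positivity)]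

lemma fFac_integrable (i : Fin d) : Integrable (fFac i0 i) := by
  unfold fFac
  by_cases h : i = i0
  · simp only [h, ite_true]
    exact (integrable1d_plus.const_mul _).congr (by filter_upwards with x; ring)
  · simp only [h, ite_false, mul_one]
    exact integrable1d_exp.const_mul _

lemma fFac_integral (i : Fin d) :
    ∫ t : ℝ, fFac i0 i t = if i = i0 then (Real.sqrt (2 * π))⁻¹ else 1 := by
  unfold fFac
  by_cases h : i = i0
  · simp only [h, ite_true]
    rw [show (fun t : ℝ => (2 * π) ^ (-(1:ℝ)/2) * Real.exp (-t ^ 2 / 2) * max t 0)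
      = fun t : ℝ => (2 * π) ^ (-(1:ℝ)/2) * (Real.exp (-t ^ 2 / 2) * max t 0) by
        funext t; ring]
    rw [integral_const_mul, int1d_plus, mul_one, c1_eq]
  · simp only [h, ite_false, mul_one]
    rw [integral_const_mul, int1d_exp, c1_eq, inv_mul_cancel₀ (ne_of_gt sqrt_two_pi_pos)]

lemma fFac_prod (x : Fin d → ℝ) :
    ∏ i, fFac i0 i (x i)
      = (2 * π) ^ (-(d : ℝ) / 2) * Real.exp (-(∑ i, x i ^ 2) / 2) * max (x i0) 0 := by
  unfold fFac
  rw [Finset.prod_mul_distrib, Finset.prod_mul_distrib]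
  congr 1
  · congr 1
    · rw [Finset.prod_const, Finset.card_univ, Fintype.card_fin, ← Real.rpow_natCast _ d,
        ← Real.rpow_mul (by positivity)]
      congr 1
      ring
    · rw [← Real.exp_sum]
      congr 1
      rw [← Finset.sum_div, ← Finset.sum_neg_distrib]
  · simp

lemma pi_integrable : Integrable (fun x : Fin d → ℝ =>
    (2 * π) ^ (-(d : ℝ) / 2) * Real.exp (-(∑ i, x i ^ 2) / 2) * max (x i0) 0) := by
  have := MeasureTheory.Integrable.fintype_prod (f := fFac i0) (fun i => fFac_integrable i0 i)
  exact this.congr (by filter_upwards with x; rw [fFac_prod])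

lemma pi_integral : ∫ x : Fin d → ℝ,
    (2 * π) ^ (-(d : ℝ) / 2) * Real.exp (-(∑ i, x i ^ 2) / 2) * max (x i0) 0
      = (Real.sqrt (2 * π))⁻¹ := by
  rw [← integral_congr_ae (Filter.Eventually.of_forall (fFac_prod i0)),
    MeasureTheory.integral_fintype_prod_volume_eq_prod (fFac i0)]
  simp only [fFac_integral]
  rw [Finset.prod_ite_eq' Finset.univ i0 (fun _ => (Real.sqrt (2 * π))⁻¹)]
  simp

end Pi

section Euclid
variable {d : ℕ} (i0 : Fin d)

lemma gaussM_coord (v : EuclideanSpace ℝ (Fin d)) :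
    gaussM v = (2 * π) ^ (-(d : ℝ) / 2) * Real.exp (-(∑ i, v i ^ 2) / 2) := by
  unfold gaussM
  congr 2
  rw [EuclideanSpace.norm_eq, Real.sq_sqrt (by positivity)]
  simp [sq_abs]

lemma euclid_integrable : Integrable (fun v : EuclideanSpace ℝ (Fin d) =>
    gaussM v * max (v i0) 0) := by
  have MP := (EuclideanSpace.volume_preserving_symm_measurableEquiv_toLp (Fin d)).symm
  rw [← MP.integrable_comp_emb (MeasurableEquiv.measurableEmbedding _)]
  refine (pi_integrable i0).congr ?_
  filter_upwards with x
  simp only [Function.comp_apply]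
  rw [gaussM_coord]
  rfl

lemma euclid_integral :
    ∫ v : EuclideanSpace ℝ (Fin d), gaussM v * max (v i0) 0 = (Real.sqrt (2 * π))⁻¹ := by
  have MP := (EuclideanSpace.volume_preserving_symm_measurableEquiv_toLp (Fin d)).symm
  rw [← MP.integral_comp (MeasurableEquiv.measurableEmbedding _)]
  rw [← pi_integral i0]
  refine integral_congr_ae (Filter.Eventually.of_forall fun x => ?_)
  simp only [Function.comp_apply]
  rw [gaussM_coord]
  rfl

end Euclid

lemma rot_key (d : ℕ) (hd : 1 ≤ d) (n : EuclideanSpace ℝ (Fin d)) (hn : ‖n‖ = 1) :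
    Integrable (fun v : EuclideanSpace ℝ (Fin d) => gaussM v * max ⟪v, n⟫_ℝ 0) ∧
    ∫ v : EuclideanSpace ℝ (Fin d), gaussM v * max ⟪v, n⟫_ℝ 0 = (Real.sqrt (2 * π))⁻¹ := by
  set i0 : Fin d := ⟨0, hd⟩
  set e₀ : EuclideanSpace ℝ (Fin d) := EuclideanSpace.single i0 (1:ℝ) with he₀def
  have he₀ : ‖e₀‖ = ‖n‖ := by
    rw [hn, he₀def, EuclideanSpace.norm_single]
    norm_num
  set R := Submodule.reflection (ℝ ∙ (e₀ - n))ᗮ with hRdef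
  have hR : R e₀ = n := Submodule.reflection_sub he₀
  have MP := R.measurePreserving
  have hemb : MeasurableEmbedding R := R.toHomeomorph.measurableEmbedding
  have hcomp : ∀ w : EuclideanSpace ℝ (Fin d),
      gaussM (R w) * max ⟪R w, n⟫_ℝ 0 = gaussM w * max (w i0) 0 := by
    intro w
    have h1 : gaussM (R w) = gaussM w := by
      unfold gaussM; rw [R.norm_map]
    have h2 : ⟪R w, n⟫_ℝ = w i0 := by
      rw [← hR, LinearIsometryEquiv.inner_map_map]
      simp [he₀def, EuclideanSpace.inner_single_right]
    rw [h1, h2]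
  constructor
  · rw [← MP.integrable_comp_emb hemb]
    exact (euclid_integrable i0).congr
      (by filter_upwards with w; exact (hcomp w).symm)
  · rw [← MP.integral_comp hemb]
    rw [← euclid_integral i0]
    exact integral_congr_ae (Filter.Eventually.of_forall fun w => hcomp w)

/-- Linearized Darrozès–Guiraud inequality: `dμ = √(2π) M (v·n)_+ dv` is a
probability measure, and if `g` is square integrable and satisfies the diffuse-reflection
condition `g(v) = ∫ g dμ` for a.e. incoming `v`, then
`√(2π) ∫ g² M (v·n) dv = ∫ (g - ∫ g dμ)² dμ ≥ 0`. -/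
theorem linearized_darrozes_guiraud
    (d : ℕ) (hd : 1 ≤ d)
    (n : EuclideanSpace ℝ (Fin d)) (hn : ‖n‖ = 1)
    (g : EuclideanSpace ℝ (Fin d) → ℝ) (hmeas : Measurable g)
    (hL2 : Integrable (fun v => g v ^ 2) (bdryMeasure d n))
    (hint : Integrable (fun v => g v ^ 2 * gaussM v * |⟪v, n⟫_ℝ|) volume)
    (hbc : ∀ᵐ v : EuclideanSpace ℝ (Fin d) ∂volume,
      ⟪v, n⟫_ℝ < 0 → g v = ∫ w, g w ∂(bdryMeasure d n)) :
    IsProbabilityMeasure (bdryMeasure d n) ∧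
    Real.sqrt (2 * π) * (∫ v : EuclideanSpace ℝ (Fin d), g v ^ 2 * gaussM v * ⟪v, n⟫_ℝ) =
      (∫ v, (g v - ∫ w, g w ∂(bdryMeasure d n)) ^ 2 ∂(bdryMeasure d n)) ∧
    0 ≤ Real.sqrt (2 * π) *
      ∫ v : EuclideanSpace ℝ (Fin d), g v ^ 2 * gaussM v * ⟪v, n⟫_ℝ := by
  have hgaussM_pos : ∀ v : EuclideanSpace ℝ (Fin d), 0 < gaussM v := by
    intro v; unfold gaussM; positivity
  set ρ : EuclideanSpace ℝ (Fin d) → ℝ :=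
    fun v => Real.sqrt (2 * π) * gaussM v * max ⟪v, n⟫_ℝ 0 with hρdef
  have hρ0 : ∀ v, 0 ≤ ρ v := fun v =>
    mul_nonneg (mul_nonneg (Real.sqrt_nonneg _) (hgaussM_pos v).le) (le_max_right _ 0)
  have hInner : Continuous fun v : EuclideanSpace ℝ (Fin d) => ⟪v, n⟫_ℝ :=
    continuous_id.inner continuous_const
  have hgaussMc : Continuous (gaussM (d := d)) := by
    unfold gaussM; continuity
  have hρc : Continuous ρ :=
    (continuous_const.mul hgaussMc).mul (hInner.max continuous_const)
  obtain ⟨hIplus, hIplusval⟩ := rot_key d hd n hn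
  obtain ⟨hIminus', hIminusval'⟩ := rot_key d hd (-n) (by rwa [norm_neg])
  have hneg_eq : (fun v : EuclideanSpace ℝ (Fin d) => gaussM v * max ⟪v, -n⟫_ℝ 0)
      = fun v => gaussM v * max (-⟪v, n⟫_ℝ) 0 := by
    funext v; rw [inner_neg_right]
  rw [hneg_eq] at hIminus' hIminusval'
  have hρint : Integrable ρ := by
    refine (hIplus.const_mul (Real.sqrt (2 * π))).congr ?_
    filter_upwards with v; rw [hρdef]; ring
  -- probability measure
  have hμdef : bdryMeasure d n
      = volume.withDensity fun v => ((Real.toNNReal (ρ v) : ℝ≥0∞)) := rfl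
  have hprob : IsProbabilityMeasure (bdryMeasure d n) := by
    constructor
    rw [hμdef, withDensity_apply _ MeasurableSet.univ, setLIntegral_univ]
    have : ∀ v, ((Real.toNNReal (ρ v) : ℝ≥0∞)) = ENNReal.ofReal (ρ v) := fun v => rfl
    simp_rw [this]
    rw [← ofReal_integral_eq_lintegral_ofReal hρint (Filter.Eventually.of_forall hρ0)]
    rw [show (∫ v, ρ v) = Real.sqrt (2*π) * ∫ v, gaussM v * max ⟪v, n⟫_ℝ 0 by
      rw [← integral_const_mul]
      exact integral_congr_ae (Filter.Eventually.of_forall fun v => by rw [hρdef]; ring)]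
    rw [hIplusval, mul_inv_cancel₀ (ne_of_gt sqrt_two_pi_pos), ENNReal.ofReal_one]
  haveI := hprob
  -- μ-integral transfer
  have hμint : ∀ f : EuclideanSpace ℝ (Fin d) → ℝ,
      ∫ v, f v ∂(bdryMeasure d n) = ∫ v, ρ v * f v := by
    intro f
    rw [hμdef, integral_withDensity_eq_integral_smul hρc.measurable.real_toNNReal f]
    exact integral_congr_ae (Filter.Eventually.of_forall fun v => by
      simp [NNReal.smul_def, Real.coe_toNNReal _ (hρ0 v)])
  obtain ⟨c, hcdef⟩ : ∃ c : ℝ, c = ∫ w, g w ∂(bdryMeasure d n) := ⟨_, rfl⟩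
  rw [← hcdef]
  -- g integrable over μ
  have hgint : Integrable g (bdryMeasure d n) := by
    have : MemLp g 2 (bdryMeasure d n) :=
      (memLp_two_iff_integrable_sq hmeas.aestronglyMeasurable).mpr hL2
    exact this.integrable one_le_two
  -- RHS
  have hRHS : (∫ v, (g v - c) ^ 2 ∂(bdryMeasure d n))
      = (∫ v, g v ^ 2 ∂(bdryMeasure d n)) - c ^ 2 := by
    have h2cg : Integrable (fun v => 2 * c * g v) (bdryMeasure d n) := hgint.const_mul _
    have e0 : (∫ v, (g v - c) ^ 2 ∂(bdryMeasure d n))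
        = ∫ v, ((g v ^ 2 - 2 * c * g v) + c ^ 2) ∂(bdryMeasure d n) :=
      integral_congr_ae (Filter.Eventually.of_forall fun v => by ring)
    have e1 := integral_add (μ := bdryMeasure d n) (hL2.sub h2cg) (integrable_const (c ^ 2))
    simp only [Pi.sub_apply] at e1
    have e2 := integral_sub (μ := bdryMeasure d n) hL2 h2cg
    rw [e0, e1, e2, integral_const_mul, integral_const]
    simp only [probReal_univ, measure_univ, ENNReal.toReal_one, smul_eq_mul, one_mul]
    rw [← hcdef]
    ring
  -- LHS split
  have habs : ∀ t : ℝ, max t 0 ≤ |t| := fun t => max_le (le_abs_self t) (abs_nonneg t)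
  have habs' : ∀ t : ℝ, max (-t) 0 ≤ |t| := fun t => max_le (neg_le_abs t) (abs_nonneg t)
  have hAint : Integrable
      (fun v : EuclideanSpace ℝ (Fin d) => g v ^ 2 * gaussM v * max ⟪v, n⟫_ℝ 0) volume := by
    refine hint.mono' (((hmeas.pow_const 2).mul hgaussMc.measurable).mul
      (hInner.max continuous_const).measurable).aestronglyMeasurable ?_
    filter_upwards with v
    have h1 : (0:ℝ) ≤ g v ^ 2 * gaussM v := mul_nonneg (sq_nonneg _) (hgaussM_pos v).le
    rw [Real.norm_eq_abs, abs_of_nonneg (mul_nonneg h1 (le_max_right _ _))]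
    exact mul_le_mul_of_nonneg_left (habs ⟪v, n⟫_ℝ) h1
  have hBint : Integrable
      (fun v : EuclideanSpace ℝ (Fin d) => g v ^ 2 * gaussM v * max (-⟪v, n⟫_ℝ) 0) volume := by
    refine hint.mono' (((hmeas.pow_const 2).mul hgaussMc.measurable).mul
      ((hInner.neg.max continuous_const)).measurable).aestronglyMeasurable ?_
    filter_upwards with v
    have h1 : (0:ℝ) ≤ g v ^ 2 * gaussM v := mul_nonneg (sq_nonneg _) (hgaussM_pos v).le
    rw [Real.norm_eq_abs, abs_of_nonneg (mul_nonneg h1 (le_max_right _ _))]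
    exact mul_le_mul_of_nonneg_left (habs' ⟪v, n⟫_ℝ) h1
  have hsplit : ∫ v : EuclideanSpace ℝ (Fin d), g v ^ 2 * gaussM v * ⟪v, n⟫_ℝ
      = (∫ v : EuclideanSpace ℝ (Fin d), g v ^ 2 * gaussM v * max ⟪v, n⟫_ℝ 0)
        - ∫ v : EuclideanSpace ℝ (Fin d), g v ^ 2 * gaussM v * max (-⟪v, n⟫_ℝ) 0 := by
    rw [← integral_sub hAint hBint]
    refine integral_congr_ae (Filter.Eventually.of_forall fun v => ?_)
    show g v ^ 2 * gaussM v * ⟪v, n⟫_ℝ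
      = g v ^ 2 * gaussM v * max ⟪v, n⟫_ℝ 0 - g v ^ 2 * gaussM v * max (-⟪v, n⟫_ℝ) 0
    rcases le_total ⟪v, n⟫_ℝ 0 with h | h
    · rw [max_eq_right h, max_eq_left (by linarith)]; ring
    · rw [max_eq_left h, max_eq_right (by linarith)]; ring
  -- A relates to ∫ g² dμ
  have hA : Real.sqrt (2 * π) * ∫ v : EuclideanSpace ℝ (Fin d), g v ^ 2 * gaussM v * max ⟪v, n⟫_ℝ 0
      = ∫ v, g v ^ 2 ∂(bdryMeasure d n) := by
    rw [hμint, ← integral_const_mul]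
    refine integral_congr_ae (Filter.Eventually.of_forall fun v => ?_)
    show Real.sqrt (2 * π) * (g v ^ 2 * gaussM v * max ⟪v, n⟫_ℝ 0)
      = ρ v * g v ^ 2
    rw [hρdef]; ring
  -- B equals c² (√(2π))⁻¹
  have hB : (∫ v : EuclideanSpace ℝ (Fin d), g v ^ 2 * gaussM v * max (-⟪v, n⟫_ℝ) 0)
      = c ^ 2 * (Real.sqrt (2 * π))⁻¹ := by
    have hae : (fun v : EuclideanSpace ℝ (Fin d) => g v ^ 2 * gaussM v * max (-⟪v, n⟫_ℝ) 0)
        =ᵐ[volume] fun v => c ^ 2 * (gaussM v * max (-⟪v, n⟫_ℝ) 0) := by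
      filter_upwards [hbc] with v hv
      show g v ^ 2 * gaussM v * max (-⟪v, n⟫_ℝ) 0 = c ^ 2 * (gaussM v * max (-⟪v, n⟫_ℝ) 0)
      rcases lt_or_ge ⟪v, n⟫_ℝ 0 with h | h
      · rw [hv h, ← hcdef]; ring
      · rw [max_eq_right (by linarith)]; ring
    rw [integral_congr_ae hae, integral_const_mul, hIminusval']
  have hmain : Real.sqrt (2 * π) * (∫ v : EuclideanSpace ℝ (Fin d), g v ^ 2 * gaussM v * ⟪v, n⟫_ℝ)
      = ∫ v, (g v - c) ^ 2 ∂(bdryMeasure d n) := by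
    rw [hsplit, mul_sub, hA, hB, hRHS]
    rw [show Real.sqrt (2*π) * (c ^ 2 * (Real.sqrt (2*π))⁻¹)
      = c ^ 2 * (Real.sqrt (2*π) * (Real.sqrt (2*π))⁻¹) by ring,
      mul_inv_cancel₀ (ne_of_gt sqrt_two_pi_pos), mul_one]
  refine ⟨hprob, hmain, ?_⟩
  rw [hmain]
  exact integral_nonneg fun v => sq_nonneg _
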